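/- Let d_PR(r) = (n₀-r)(n₁-r) - ⌊([n₀+n₁-n₂-r]⁺)²/4⌋ where (n₀,n₁,n₂) is the sorted triple of (N,m,L), n₀ ≤ n₁ ≤ n₂. If m ≤ |N - L| + 1 then d_PR(0) = min(N,L)·m. -/
import Mathlib


/-- The pure-reflection DMT of the (N,m,L) channel at multiplexing gain r, evaluated on
the sorted triple (n₀,n₁,n₂) of (N,m,L). -/
def dPR (N m L r : ℤ) : ℤ :=
  let n₀ := min N (min m L)
  let n₂ := max N (max m L)
  let n₁ := N + m + L - n₀ - n₂
  (n₀ - r) * (n₁ - r) - (max 0 (n₀ + n₁ - n₂ - r)) ^ 2 / 4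

/-- if m ≤ |N - L| + 1 then d_PR(0) = min(N,L)·m. -/
theorem full_diversity_subchannel (N L m : ℤ) (hN : 1 ≤ N) (hL : 1 ≤ L) (hm : 1 ≤ m)
    (hm2 : m ≤ |N - L| + 1) :
    dPR N m L 0 = min N L * m := by
  unfold dPR
  simp only [sub_zero]
  have hsq : (max 0 (min N (min m L) + (N + m + L - min N (min m L) - max N (max m L)) -
      max N (max m L))) ^ 2 / 4 = 0 := by
    have h1 : max 0 (min N (min m L) + (N + m + L - min N (min m L) - max N (max m L)) -
        max N (max m L)) = 0 ∨
        max 0 (min N (min m L) + (N + m + L - min N (min m L) - max N (max m L)) -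
        max N (max m L)) = 1 := by
      rcases abs_cases (N - L) with ⟨ha, _⟩ | ⟨ha, _⟩ <;> rw [ha] at hm2 <;> omega
    rcases h1 with h1 | h1 <;> rw [h1] <;> norm_num
  rw [hsq, sub_zero]
  rcases abs_cases (N - L) with ⟨ha, h⟩ | ⟨ha, h⟩ <;> rw [ha] at hm2
  · -- L ≤ N
    have e0 : min N (min m L) = min m L := by omega
    have e2 : max N (max m L) = N := by omega
    have e3 : min N L = L := by omega
    rw [e0, e2, e3]
    rcases le_total m L with h2 | h2
    · rw [min_eq_left h2]; ring
    · rw [min_eq_right h2]; ring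
  · -- N ≤ L
    have e0 : min N (min m L) = min m N := by omega
    have e2 : max N (max m L) = L := by omega
    have e3 : min N L = N := by omega
    rw [e0, e2, e3]
    rcases le_total m N with h2 | h2
    · rw [min_eq_left h2]; ring
    · rw [min_eq_right h2]; ring
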